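/- Let g : 𝕋 → ℝ be C¹ and 0 < α < 2. Define D_α g(x) = ∫_{|z|<R} |g(x+z) − g(x)|²/|z|^{1+α} dz for fixed R > 0. Then for all x and all z with |z| < R: |g(x+z) − g(x) − g′(x)·z| ≤ √(D_α g′(x)) · |z|^{1+α/2} / √(1+α) — in particular the second-order Taylor remainder of the antiderivative is controlled pointwise by the local fractional dissipation of the derivative. -/

import Mathlib

open MeasureTheory ENNReal

theorem stmt_14 (g : ℝ → ℝ) (hg : ContDiff ℝ 1 g) (α R : ℝ)
    (hα : 0 < α) (hα2 : α < 2) (hR : 0 < R) :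
    ∀ x z : ℝ, |z| < R →
      ENNReal.ofReal |g (x+z) - g x - deriv g x * z| ≤
        (∫⁻ w in Set.Ioo (-R) R,
            ENNReal.ofReal ((deriv g (x+w) - deriv g x)^2 / |w| ^ (1+α))) ^ ((1:ℝ)/2)
          * ENNReal.ofReal (|z| ^ (1 + α/2) / Real.sqrt (1+α)) := by
  intro x z hz
  by_cases hz0 : z = 0
  · simp [hz0]
  have hgc : Continuous (deriv g) := hg.continuous_deriv le_rfl
  set d : ℝ → ℝ := fun w => deriv g (x + w) - deriv g x with hd
  have hdc : Continuous d := (hgc.comp (continuous_const.add continuous_id)).sub continuous_const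
  set p : ℝ := (1 + α) / 2 with hp
  have hppos : 0 < p := by positivity
  -- Step 1: FTC
  have hft : g (x+z) - g x - deriv g x * z = ∫ w in (0:ℝ)..z, d w := by
    have h1 : (∫ w in (0:ℝ)..z, deriv g (x + w)) = g (x+z) - g x := by
      rw [intervalIntegral.integral_comp_add_left (fun u => deriv g u) x, add_zero]
      exact intervalIntegral.integral_deriv_eq_sub
        (fun u _ => (hg.differentiable one_ne_zero).differentiableAt)
        (hgc.intervalIntegrable _ _)
    have h2 : (∫ _ in (0:ℝ)..z, deriv g x) = deriv g x * z := by
      simp [mul_comm]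
    have hi1 : IntervalIntegrable (fun w : ℝ => deriv g (x + w)) volume 0 z :=
      Continuous.intervalIntegrable
        (by exact hgc.comp (continuous_const.add continuous_id)) _ _
    rw [← h1, ← h2, ← intervalIntegral.integral_sub hi1 intervalIntegrable_const]
  have habs : |g (x+z) - g x - deriv g x * z| ≤ ∫ w in Set.uIoc 0 z, |d w| := by
    rw [hft]
    simp only [← Real.norm_eq_abs]
    exact intervalIntegral.norm_integral_le_integral_norm_uIoc (f := d) (a := 0) (b := z)
  refine le_trans (ENNReal.ofReal_le_ofReal habs) ?_
  have hintd : IntegrableOn (fun w => |d w|) (Set.uIoc 0 z) := by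
    exact (hdc.abs.integrableOn_uIoc)
  rw [MeasureTheory.ofReal_integral_eq_lintegral_ofReal hintd
    (ae_of_all _ fun w => abs_nonneg _)]
  set F : ℝ → ℝ≥0∞ := fun w => ENNReal.ofReal (|d w| / |w| ^ p) with hF
  set G : ℝ → ℝ≥0∞ := fun w => ENNReal.ofReal (|w| ^ p) with hG
  have habsrpow : Continuous fun w : ℝ => |w| ^ p :=
    continuous_abs.rpow_const (fun w => Or.inr hppos.le)
  have hFmeas : AEMeasurable F (volume.restrict (Set.uIoc 0 z)) :=
    ((hdc.abs.measurable.div habsrpow.measurable).ennreal_ofReal).aemeasurable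
  have hGmeas : AEMeasurable G (volume.restrict (Set.uIoc 0 z)) :=
    (habsrpow.measurable.ennreal_ofReal).aemeasurable
  have h0 : ∀ᵐ w : ℝ ∂(volume.restrict (Set.uIoc 0 z)), w ≠ 0 := by
    refine ae_restrict_of_ae ?_
    refine ae_iff.2 ?_
    simpa using measure_singleton (0:ℝ)
  have hae : ∀ᵐ w ∂(volume.restrict (Set.uIoc 0 z)),
      ENNReal.ofReal |d w| = (F * G) w := by
    filter_upwards [h0] with w hw
    have hwp : (0:ℝ) < |w| ^ p := Real.rpow_pos_of_pos (abs_pos.2 hw) p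
    simp only [Pi.mul_apply, hF, hG]
    rw [← ENNReal.ofReal_mul (by positivity), div_mul_cancel₀ _ hwp.ne']
  rw [lintegral_congr_ae hae]
  have hconj : Real.HolderConjugate 2 2 := Real.holderConjugate_iff.mpr ⟨one_lt_two, by norm_num⟩
  refine le_trans (ENNReal.lintegral_mul_le_Lp_mul_Lq _ hconj hFmeas hGmeas) ?_
  have key : p * 2 = 1 + α := by rw [hp]; ring
  -- first factor
  have hF2 : ∀ w, F w ^ (2:ℝ) = ENNReal.ofReal ((d w)^2 / |w| ^ (1+α)) := by
    intro w
    rw [hF, ENNReal.ofReal_rpow_of_nonneg (by positivity) (by norm_num : (0:ℝ) ≤ 2)]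
    congr 1
    rw [show (2:ℝ) = ((2:ℕ):ℝ) by norm_num, Real.rpow_natCast, div_pow, sq_abs,
      ← Real.rpow_natCast (|w| ^ p) 2, ← Real.rpow_mul (abs_nonneg w)]
    norm_num [key]
  have hsub : Set.uIoc 0 z ⊆ Set.Ioo (-R) R := by
    intro w hw
    obtain ⟨hz1, hz2⟩ := abs_lt.1 hz
    rcases Set.mem_uIoc.1 hw with ⟨h1, h2⟩ | ⟨h1, h2⟩ <;>
      exact ⟨by linarith, by linarith⟩
  have hfirst : (∫⁻ w in Set.uIoc 0 z, F w ^ (2:ℝ)) ≤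
      ∫⁻ w in Set.Ioo (-R) R,
        ENNReal.ofReal ((deriv g (x+w) - deriv g x)^2 / |w| ^ (1+α)) := by
    simp only [hF2]
    exact lintegral_mono_set hsub
  -- second factor
  have hG2 : ∀ w, G w ^ (2:ℝ) = ENNReal.ofReal (|w| ^ (1+α)) := by
    intro w
    rw [hG, ENNReal.ofReal_rpow_of_nonneg (by positivity) (by norm_num : (0:ℝ) ≤ 2)]
    congr 1
    rw [← Real.rpow_mul (abs_nonneg w), key]
  have hval : (∫ w in Set.uIoc 0 z, |w| ^ (1+α)) = |z| ^ (2+α) / (2+α) := by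
    rcases lt_or_gt_of_ne hz0 with hneg | hpos
    · rw [Set.uIoc_of_ge hneg.le]
      have hcong : ∀ w ∈ Set.Ioc z 0, |w| ^ (1+α) = (-w) ^ (1+α) := fun w hw => by
        rw [abs_of_nonpos hw.2]
      rw [setIntegral_congr_fun measurableSet_Ioc hcong,
        ← intervalIntegral.integral_of_le hneg.le,
        intervalIntegral.integral_comp_neg (fun w => w ^ (1+α))]
      rw [neg_zero, integral_rpow (Or.inl (by linarith))]
      rw [Real.zero_rpow (by positivity), abs_of_neg hneg]
      norm_num
      ring_nf
    · rw [Set.uIoc_of_le hpos.le]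
      have hcong : ∀ w ∈ Set.Ioc 0 z, |w| ^ (1+α) = w ^ (1+α) := fun w hw => by
        rw [abs_of_pos hw.1]
      rw [setIntegral_congr_fun measurableSet_Ioc hcong,
        ← intervalIntegral.integral_of_le hpos.le,
        integral_rpow (Or.inl (by linarith)),
        Real.zero_rpow (by positivity), abs_of_pos hpos]
      norm_num
      ring_nf
  have hintrpow : IntegrableOn (fun w => |w| ^ (1+α)) (Set.uIoc 0 z) :=
    (continuous_abs.rpow_const (fun w => Or.inr (by positivity))).integrableOn_uIoc
  have hsecond : (∫⁻ w in Set.uIoc 0 z, G w ^ (2:ℝ)) =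
      ENNReal.ofReal (|z| ^ (2+α) / (2+α)) := by
    simp only [hG2]
    rw [← MeasureTheory.ofReal_integral_eq_lintegral_ofReal hintrpow
      (ae_of_all _ fun w => Real.rpow_nonneg (abs_nonneg w) _), hval]
  refine le_trans (mul_le_mul (ENNReal.rpow_le_rpow hfirst (by norm_num))
    (le_of_eq (by rw [hsecond])) zero_le zero_le) ?_
  refine mul_le_mul_right ?_ _
  rw [ENNReal.ofReal_rpow_of_nonneg (by positivity) (by norm_num : (0:ℝ) ≤ 1/2),
    ← Real.sqrt_eq_rpow]
  refine ENNReal.ofReal_le_ofReal ?_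
  rw [Real.sqrt_div (by positivity)]
  have hnum : Real.sqrt (|z| ^ (2+α)) = |z| ^ (1 + α/2) := by
    rw [Real.sqrt_eq_rpow, ← Real.rpow_mul (abs_nonneg z)]
    norm_num
    ring_nf
  rw [hnum]
  refine div_le_div_of_nonneg_left (by positivity) (Real.sqrt_pos.2 (by linarith)) ?_
  exact Real.sqrt_le_sqrt (by linarith)
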